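/- Set A = F(c) − ℓ/(ℓ−1) and B = (ℓ/(ℓ−1))·c^d. Then for every x with 0 < x ≤ c, A + B·ρ^d·x^{−d} ≤ F(x) ≤ A + B·ρ^{−d}·x^{−d}. -/
import Mathlib


open Finset

/-- With `A = F(c) − ℓ/(ℓ−1)` and `B = (ℓ/(ℓ−1))·c^d`, for every `x`
with `0 < x ≤ c` we have `A + B·ρ^d·x^{−d} ≤ F(x) ≤ A + B·ρ^{−d}·x^{−d}`. -/
theorem ph_counting_function_bounds
    (ρ ℓ c : ℝ) (hρ : ρ ∈ Set.Ioo (0 : ℝ) 1) (hℓ : 1 < ℓ) (hc : 0 < c)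
    (d : ℝ) (hd : d = Real.log ℓ / Real.log (1 / ρ))
    (F : ℝ → ℝ)
    (hmono : AntitoneOn F (Set.Ioc 0 c))
    (hrec : ∀ k : ℕ, 1 ≤ k → F (ρ ^ k * c) = F c + ∑ j ∈ Finset.Icc 1 k, ℓ ^ j)
    (A B : ℝ) (hA : A = F c - ℓ / (ℓ - 1)) (hB : B = (ℓ / (ℓ - 1)) * c ^ d) :
    ∀ x : ℝ, 0 < x → x ≤ c →
      A + B * ρ ^ d * x ^ (-d) ≤ F x ∧ F x ≤ A + B * ρ ^ (-d) * x ^ (-d) := by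
  obtain ⟨hρ0, hρ1⟩ := hρ
  have hℓ0 : (0:ℝ) < ℓ := by linarith
  have hℓ1 : (0:ℝ) < ℓ - 1 := by linarith
  have hu1 : 1 < 1/ρ := by
    rw [lt_div_iff₀ hρ0]; linarith
  have hu0 : (0:ℝ) < 1/ρ := by positivity
  have hlogu : 0 < Real.log (1/ρ) := Real.log_pos hu1
  have hd0 : 0 ≤ d := by
    rw [hd]; exact div_nonneg (Real.log_nonneg hℓ.le) hlogu.le
  have hkey : (1/ρ) ^ d = ℓ := by
    rw [hd, Real.rpow_def_of_pos hu0, mul_comm, div_mul_cancel₀ _ hlogu.ne', Real.exp_log hℓ0]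
  have hρd : ρ ^ (-d) = ℓ := by
    rw [Real.rpow_neg hρ0.le, ← Real.inv_rpow hρ0.le, ← one_div, hkey]
  have hρd' : ρ ^ d = ℓ⁻¹ := by
    have := hρd
    rw [Real.rpow_neg hρ0.le] at this
    rw [← this, inv_inv]
  have hsum : ∀ k:ℕ, ∑ j ∈ Finset.Icc 1 k, ℓ^j = ℓ/(ℓ-1) * ℓ^k - ℓ/(ℓ-1) := by
    intro k
    induction k with
    | zero => simp
    | succ n ih =>
      rw [Finset.sum_Icc_succ_top (Nat.one_le_iff_ne_zero.mpr (Nat.succ_ne_zero n)), ih]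
      field_simp
      ring
  have hF : ∀ k:ℕ, F (ρ^k * c) = A + ℓ/(ℓ-1) * ℓ^k := by
    intro k
    rcases Nat.eq_zero_or_pos k with h|h
    · subst h; simp [hA]
    · rw [hrec k h, hsum, hA]; ring
  have hmem : ∀ k:ℕ, ρ^k * c ∈ Set.Ioc (0:ℝ) c := by
    intro k
    refine ⟨by positivity, ?_⟩
    exact mul_le_of_le_one_left hc.le (pow_le_one₀ hρ0.le hρ1.le)
  have hpow : ∀ m:ℕ, ℓ^m = ((1/ρ)^m)^d := by
    intro m
    rw [← hkey, ← Real.rpow_natCast ((1/ρ)^d) m, ← Real.rpow_mul hu0.le, mul_comm,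
      Real.rpow_mul hu0.le, Real.rpow_natCast]
  intro x hx hxc
  have hcx : c^d * x^(-d) = (c/x)^d := by
    rw [Real.div_rpow hc.le hx.le, Real.rpow_neg hx.le, div_eq_mul_inv]
  have hex : ∃ n:ℕ, ρ^n * c < x := by
    obtain ⟨n, hn⟩ := exists_pow_lt_of_lt_one (div_pos hx hc) hρ1
    exact ⟨n, (lt_div_iff₀ hc).mp hn⟩
  classical
  set n := Nat.find hex with hn
  have hn1 : ρ^n * c < x := Nat.find_spec hex
  have hn0 : n ≠ 0 := by
    intro h
    rw [h] at hn1
    simp at hn1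
    linarith
  obtain ⟨k, hk⟩ : ∃ k, n = k+1 := ⟨n-1, (Nat.succ_pred_eq_of_ne_zero hn0).symm⟩
  have hxk : x ≤ ρ^k * c := by
    by_contra h
    push_neg at h
    exact Nat.find_min hex (show k < n by omega) h
  have hn1' : ρ^(k+1) * c < x := by rw [← hk]; exact hn1
  -- upper bound inequality (c/x)^d vs powers of ℓ
  have hup : ℓ^k ≤ c^d * x^(-d) := by
    rw [hcx, hpow k]
    apply Real.rpow_le_rpow (by positivity) _ hd0
    rw [le_div_iff₀ hx, one_div, inv_pow, inv_mul_le_iff₀ (pow_pos hρ0 k)]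
    exact hxk
  have hlow : c^d * x^(-d) ≤ ℓ^(k+1) := by
    rw [hcx, hpow (k+1)]
    apply Real.rpow_le_rpow (by positivity) _ hd0
    rw [div_le_iff₀ hx, one_div, inv_pow, inv_mul_eq_div, le_div_iff₀ (pow_pos hρ0 (k+1))]
    nlinarith [hn1']
  constructor
  · -- lower bound on F
    have h1 : F (ρ^k * c) ≤ F x := hmono ⟨hx, hxc⟩ (hmem k) hxk
    rw [hF k] at h1
    have h2 : B * ρ^d * x^(-d) ≤ ℓ/(ℓ-1) * ℓ^k := by
      rw [hB, hρd']
      have : (ℓ/(ℓ-1)) * c^d * ℓ⁻¹ * x^(-d) = (ℓ/(ℓ-1)) * ℓ⁻¹ * (c^d * x^(-d)) := by ring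
      rw [this]
      calc (ℓ/(ℓ-1)) * ℓ⁻¹ * (c^d * x^(-d)) ≤ (ℓ/(ℓ-1)) * ℓ⁻¹ * ℓ^(k+1) := by
            apply mul_le_mul_of_nonneg_left hlow
            positivity
        _ = ℓ/(ℓ-1) * ℓ^k := by
            field_simp
            ring
    linarith
  · -- upper bound on F
    have h1 : F x ≤ F (ρ^(k+1) * c) := hmono (hmem (k+1)) ⟨hx, hxc⟩ hn1'.le
    rw [hF (k+1)] at h1
    have h2 : ℓ/(ℓ-1) * ℓ^(k+1) ≤ B * ρ^(-d) * x^(-d) := by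
      rw [hB, hρd]
      have : (ℓ/(ℓ-1)) * c^d * ℓ * x^(-d) = (ℓ/(ℓ-1)) * ℓ * (c^d * x^(-d)) := by ring
      rw [this, pow_succ, mul_comm (ℓ^k) ℓ, ← mul_assoc]
      apply mul_le_mul_of_nonneg_left hup
      positivity
    linarith
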